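/- Let h be a d×d complex matrix with h² = 1 and let M be any d×d complex matrix. Then the commutator satisfies the parameter-shift identity [h, M] = −i·( exp(iπh/4) · M · exp(−iπh/4) − exp(−iπh/4) · M · exp(iπh/4) ). -/

import Mathlib

/-- Closed form for `exp (z • h)` when `h ^ 2 = 1`. -/
lemma exp_smul_of_sq_eq_one (d : ℕ) (h : Matrix (Fin d) (Fin d) ℂ)
    (hinv : h ^ 2 = 1) (z : ℂ) :
    NormedSpace.exp (z • h) = Complex.cosh z • 1 + Complex.sinh z • h := by
  rw [NormedSpace.exp_eq_tsum ℂ]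
  refine HasSum.tsum_eq ?_
  refine HasSum.even_add_odd ?_ ?_
  · have := (Complex.hasSum_cosh z).smul_const (1 : Matrix (Fin d) (Fin d) ℂ)
    convert this using 2 with n
    case e'_3 => rfl
    rw [smul_pow, pow_mul h, hinv, one_pow, smul_smul, div_eq_mul_inv, mul_comm]
  · have := (Complex.hasSum_sinh z).smul_const h
    convert this using 2 with n
    case e'_3 => rfl
    rw [smul_pow, pow_succ h, pow_mul h, hinv, one_pow, one_mul, smul_smul, div_eq_mul_inv,
      mul_comm]

/-- Parameter-shift commutator identity for involutory operators: if `h² = 1` then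
`[h, M] = −i (exp(iπh/4) M exp(−iπh/4) − exp(−iπh/4) M exp(iπh/4))`. -/
theorem commutator_parameter_shift
    (d : ℕ) (h M : Matrix (Fin d) (Fin d) ℂ) (hinv : h ^ 2 = 1) :
    h * M - M * h =
      (-Complex.I) •
        (NormedSpace.exp ((Complex.I * (Real.pi / 4 : ℝ)) • h) * M *
            NormedSpace.exp ((-(Complex.I * (Real.pi / 4 : ℝ))) • h) -
          NormedSpace.exp ((-(Complex.I * (Real.pi / 4 : ℝ))) • h) * M *
            NormedSpace.exp ((Complex.I * (Real.pi / 4 : ℝ)) • h)) := by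
  set θ : ℂ := Complex.I * (Real.pi / 4 : ℝ) with hθ
  set a : ℂ := Complex.cosh θ with ha
  set b : ℂ := Complex.sinh θ with hb
  have e1 : NormedSpace.exp (θ • h) = a • 1 + b • h :=
    exp_smul_of_sq_eq_one d h hinv θ
  have e2 : NormedSpace.exp ((-θ) • h) = a • 1 - b • h := by
    rw [exp_smul_of_sq_eq_one d h hinv (-θ), Complex.cosh_neg, Complex.sinh_neg,
      neg_smul, ← ha, ← hb, sub_eq_add_neg]
  have hab : 2 * (b * a) = Complex.I := by
    rw [ha, hb, ← mul_assoc, ← Complex.sinh_two_mul]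
    have : 2 * θ = (Real.pi / 2 : ℝ) * Complex.I := by
      rw [hθ]; push_cast; ring
    rw [this, Complex.sinh_mul_I, ← Complex.ofReal_sin, Real.sin_pi_div_two,
      Complex.ofReal_one, one_mul]
  rw [e1, e2]
  have expand :
      (a • 1 + b • h) * M * (a • 1 - b • h) - (a • 1 - b • h) * M * (a • 1 + b • h)
        = (2 * (b * a)) • (h * M) - (2 * (b * a)) • (M * h) := by
    simp only [add_mul, sub_mul, mul_add, mul_sub, smul_mul_assoc, mul_smul_comm,
      one_mul, mul_one, smul_smul]
    module
  rw [expand, hab, ← smul_sub, smul_smul]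
  simp [Complex.I_mul_I]
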